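/- (Helstrom bound, two states, unequal priors.) Let ρ₀, ρ₁ be density operators on a finite-dimensional Hilbert space and p₀, p₁ ≥ 0 with p₀ + p₁ = 1. Then the maximum over POVMs {M₀, M₁} (M₀, M₁ ≥ 0, M₀ + M₁ = I) of p₀ tr(M₀ρ₀) + p₁ tr(M₁ρ₁) equals p₀ + tr((p₁ρ₁ - p₀ρ₀)⁺), where X⁺ denotes the positive part of a Hermitian operator X. -/

import Mathlib

open Matrix ComplexOrder

/-- The positive part `A⁺` of a Hermitian matrix `A`, obtained from its spectral
decomposition by keeping only the nonnegative eigenvalues. -/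
noncomputable def posPart' {ι : Type*} [Fintype ι] [DecidableEq ι]
    (A : Matrix ι ι ℂ) (hA : A.IsHermitian) : Matrix ι ι ℂ :=
  (hA.eigenvectorUnitary : Matrix ι ι ℂ) *
    Matrix.diagonal (fun i => ((max (hA.eigenvalues i) 0 : ℝ) : ℂ)) *
    star (hA.eigenvectorUnitary : Matrix ι ι ℂ)

/-- Diagonal entries of a PSD matrix are nonnegative. -/
lemma psd_diag_nonneg {d : ℕ} (N : Matrix (Fin d) (Fin d) ℂ) (hN : N.PosSemidef) (i : Fin d) :
    0 ≤ N i i := by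
  exact hN.diag_nonneg

/-- Trace of `B * A` in the eigenbasis of a Hermitian `A`. -/
lemma trace_mul_isHermitian {d : ℕ} (A B : Matrix (Fin d) (Fin d) ℂ) (hA : A.IsHermitian) :
    (B * A).trace =
      ∑ i, ((star (hA.eigenvectorUnitary : Matrix (Fin d) (Fin d) ℂ) * B *
        (hA.eigenvectorUnitary : Matrix (Fin d) (Fin d) ℂ)) i i) * (hA.eigenvalues i : ℂ) := by
  set U := (hA.eigenvectorUnitary : Matrix (Fin d) (Fin d) ℂ) with hU
  conv_lhs => rw [hA.spectral_theorem, Unitary.conjStarAlgAut_apply]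
  rw [show B * (U * diagonal (RCLike.ofReal ∘ hA.eigenvalues) * star U)
      = (B * U * diagonal (RCLike.ofReal ∘ hA.eigenvalues)) * star U by noncomm_ring,
    trace_mul_comm, ← Matrix.mul_assoc, ← Matrix.mul_assoc]
  simp [Matrix.trace, Matrix.mul_diagonal, Matrix.diag]

/-- Helstrom bound for two states with unequal priors: the maximum over POVMs
`{M₀, M₁}` of `p₀ tr(M₀ρ₀) + p₁ tr(M₁ρ₁)` equals `p₀ + tr((p₁ρ₁ - p₀ρ₀)⁺)`. -/
theorem helstrom_two_states {d : ℕ} (ρ₀ ρ₁ : Matrix (Fin d) (Fin d) ℂ)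
    (hρ₀ : ρ₀.PosSemidef) (hρ₁ : ρ₁.PosSemidef)
    (htr₀ : ρ₀.trace = 1) (htr₁ : ρ₁.trace = 1)
    (p₀ p₁ : ℝ) (hp₀ : 0 ≤ p₀) (hp₁ : 0 ≤ p₁) (hsum : p₀ + p₁ = 1)
    (hD : ((p₁ : ℂ) • ρ₁ - (p₀ : ℂ) • ρ₀).IsHermitian) :
    IsGreatest {c : ℂ | ∃ M₀ M₁ : Matrix (Fin d) (Fin d) ℂ,
        M₀.PosSemidef ∧ M₁.PosSemidef ∧ M₀ + M₁ = 1 ∧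
        c = (p₀ : ℂ) * (M₀ * ρ₀).trace + (p₁ : ℂ) * (M₁ * ρ₁).trace}
      ((p₀ : ℂ) + (posPart' ((p₁ : ℂ) • ρ₁ - (p₀ : ℂ) • ρ₀) hD).trace) := by
  set D := (p₁ : ℂ) • ρ₁ - (p₀ : ℂ) • ρ₀ with hDdef
  set U := (hD.eigenvectorUnitary : Matrix (Fin d) (Fin d) ℂ) with hUdef
  have hUU : star U * U = 1 := mem_unitaryGroup_iff'.mp hD.eigenvectorUnitary.2
  have hUU' : U * star U = 1 := mem_unitaryGroup_iff.mp hD.eigenvectorUnitary.2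
  -- trace of the positive part
  have htrP : (posPart' D hD).trace = ∑ i, ((max (hD.eigenvalues i) 0 : ℝ) : ℂ) := by
    rw [posPart', trace_mul_comm, ← Matrix.mul_assoc, hUU, Matrix.one_mul]
    simp [Matrix.trace, Matrix.diag]
  -- reduction of the value of a POVM
  have hred : ∀ M₀ M₁ : Matrix (Fin d) (Fin d) ℂ, M₀ + M₁ = 1 →
      (p₀ : ℂ) * (M₀ * ρ₀).trace + (p₁ : ℂ) * (M₁ * ρ₁).trace
        = (p₀ : ℂ) + (M₁ * D).trace := by
    intro M₀ M₁ hMsum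
    have hM₀ : M₀ = 1 - M₁ := eq_sub_of_add_eq hMsum
    rw [hM₀, hDdef, Matrix.sub_mul, Matrix.one_mul, trace_sub, htr₀, Matrix.mul_sub,
      Matrix.mul_smul, Matrix.mul_smul, trace_sub, trace_smul, trace_smul]
    simp only [smul_eq_mul]
    ring
  constructor
  · -- membership: the projection onto nonnegative eigenvalues is optimal
    set χ : Fin d → ℂ := fun i => if 0 ≤ hD.eigenvalues i then (1 : ℂ) else 0 with hχ
    set P : Matrix (Fin d) (Fin d) ℂ := U * diagonal χ * star U with hP
    have hχnn : ∀ i, 0 ≤ χ i := by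
      intro i; rw [hχ]; dsimp only; split_ifs
      · exact zero_le_one
      · exact le_refl 0
    have hχnn' : ∀ i, 0 ≤ 1 - χ i := by
      intro i; rw [hχ]; dsimp only; split_ifs
      · simp
      · simp [zero_le_one]
    have hPpsd : P.PosSemidef := by
      have := (posSemidef_diagonal_iff.mpr hχnn).mul_mul_conjTranspose_same U
      rw [hP]
      simpa [Matrix.star_eq_conjTranspose] using this
    have hQeq : (1 : Matrix (Fin d) (Fin d) ℂ) - P
        = U * diagonal (fun i => 1 - χ i) * star U := by
      have : diagonal (fun i => 1 - χ i) = 1 - diagonal χ := by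
        rw [← diagonal_one, diagonal_sub]
      rw [this, Matrix.mul_sub, Matrix.mul_one, Matrix.sub_mul, hUU', hP]
    have hQpsd : ((1 : Matrix (Fin d) (Fin d) ℂ) - P).PosSemidef := by
      rw [hQeq]
      have := (posSemidef_diagonal_iff.mpr hχnn').mul_mul_conjTranspose_same U
      simpa [Matrix.star_eq_conjTranspose] using this
    refine ⟨1 - P, P, hQpsd, hPpsd, by abel, ?_⟩
    rw [hred (1 - P) P (by abel)]
    congr 1
    rw [htrP, trace_mul_isHermitian D P hD]
    have hdiag : star U * P * U = diagonal χ := by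
      rw [show star U * (U * diagonal χ * star U) * U
          = (star U * U) * diagonal χ * (star U * U) by noncomm_ring,
        hUU, Matrix.one_mul, Matrix.mul_one]
    rw [hdiag]
    refine Finset.sum_congr rfl fun i _ => ?_
    rw [diagonal_apply_eq, hχ]
    dsimp only
    split_ifs with h
    · rw [one_mul, max_eq_left h]
    · rw [zero_mul, max_eq_right (le_of_not_ge h)]
      simp
  · -- upper bound
    rintro c ⟨M₀, M₁, h₀, h₁, hs, hc⟩
    rw [hc, hred M₀ M₁ hs, htrP]
    refine add_le_add_right ?_ _
    rw [trace_mul_isHermitian D M₁ hD]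
    set N := star U * M₁ * U with hNdef
    have hN : N.PosSemidef := by
      have := h₁.conjTranspose_mul_mul_same U
      rw [hNdef]
      simpa [Matrix.star_eq_conjTranspose] using this
    have hN' : ((1 : Matrix (Fin d) (Fin d) ℂ) - N).PosSemidef := by
      have h1 : star U * M₀ * U = (1 : Matrix (Fin d) (Fin d) ℂ) - N := by
        rw [eq_sub_of_add_eq hs, Matrix.mul_sub, Matrix.mul_one, Matrix.sub_mul, hUU]
      rw [← h1]
      have := h₀.conjTranspose_mul_mul_same U
      simpa [Matrix.star_eq_conjTranspose] using this
    refine Finset.sum_le_sum fun i _ => ?_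
    have hz0 : 0 ≤ N i i := psd_diag_nonneg N hN i
    have hz1 : N i i ≤ 1 := by
      have := psd_diag_nonneg _ hN' i
      simp only [Matrix.sub_apply, Matrix.one_apply_eq] at this
      exact sub_nonneg.mp this
    -- turn into a real inequality
    have him : (N i i).im = 0 := by
      have := (Complex.le_def.mp hz0).2; simpa using this.symm
    have hre0 : 0 ≤ (N i i).re := by simpa using (Complex.le_def.mp hz0).1
    have hre1 : (N i i).re ≤ 1 := by simpa using (Complex.le_def.mp hz1).1
    have hz : N i i = ((N i i).re : ℂ) := Complex.ext rfl (by simp [him])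
    rw [hz, ← Complex.ofReal_mul]
    rw [Complex.real_le_real]
    rcases le_total 0 (hD.eigenvalues i) with h | h
    · rw [max_eq_left h]
      nlinarith
    · rw [max_eq_right h]
      nlinarith
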